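/- Suppose x' = A(t)x admits a strong exponential dichotomy with respect to a family of norms ‖·‖_t satisfying ‖x‖ ≤ ‖x‖_t ≤ Ce^{ε|t|}‖x‖, and let Y_∞ and the bounded invertible operator 𝔸 be as defined. If for some real μ > 0 the evolution family T_μ(t,s) := μ^{−(t−s)}T(t,s) admits a strong exponential dichotomy with respect to the norms ‖·‖_t, then μ does not belong to the spectrum of 𝔸 (as a bounded operator on the real Banach space Y_∞), i.e. μ·Id − 𝔸 is invertible. -/

import Mathlib

/- STATEMENT 3: If for some μ > 0 the rescaled evolution family
T_μ(t,s) = μ^{-(t-s)} T(t,s) admits a strong exponential dichotomy with respect to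
the norms ‖·‖_t, then μ does not belong to the spectrum of the discretized operator
𝔸 on Y_∞, i.e. μ·Id − 𝔸 is invertible. -/

noncomputable section

/-- `ℝ^d` -/
abbrev Ed (d : ℕ) := Fin d → ℝ

/-- A family of norms on `ℝ^d` indexed by `ℤ`, each bounded below by the ambient norm
(so each seminorm is in fact a norm). -/
structure NormFamily (d : ℕ) where
  N : ℤ → Seminorm ℝ (Ed d)
  lower : ∀ (n : ℤ) (x : Ed d), ‖x‖ ≤ N n x

variable {d : ℕ}

/-- The submodule of two-sided sequences with bounded weighted norms. -/
def YinfSubmodule (𝒩 : NormFamily d) : Submodule ℝ (ℤ → Ed d) where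
  carrier := {x | ∃ C : ℝ, ∀ n : ℤ, 𝒩.N n (x n) ≤ C}
  add_mem' := by
    rintro x y ⟨Cx, hx⟩ ⟨Cy, hy⟩
    exact ⟨Cx + Cy, fun n => le_trans (map_add_le_add _ _ _) (add_le_add (hx n) (hy n))⟩
  zero_mem' := ⟨0, fun n => by simp⟩
  smul_mem' := by
    rintro c x ⟨Cx, hx⟩
    refine ⟨‖c‖ * Cx, fun n => ?_⟩
    rw [Pi.smul_apply, map_smul_eq_mul]
    exact mul_le_mul_of_nonneg_left (hx n) (norm_nonneg c)

/-- The Banach space `Y_∞` of sequences bounded with respect to the family of norms,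
equipped with the norm `‖x‖ = sup_n ‖x_n‖_n`. -/
def Yinf (𝒩 : NormFamily d) : Type := ↥(YinfSubmodule 𝒩)

instance (𝒩 : NormFamily d) : AddCommGroup (Yinf 𝒩) :=
  inferInstanceAs (AddCommGroup (YinfSubmodule 𝒩))

instance (𝒩 : NormFamily d) : Module ℝ (Yinf 𝒩) :=
  inferInstanceAs (Module ℝ (YinfSubmodule 𝒩))

namespace Yinf

variable {𝒩 : NormFamily d}

/-- The underlying sequence. -/
def seq (x : Yinf 𝒩) : ℤ → Ed d := x.1

lemma bddAbove (x : Yinf 𝒩) : BddAbove (Set.range fun n => 𝒩.N n (x.seq n)) := by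
  obtain ⟨C, hC⟩ := x.2
  exact ⟨C, by rintro _ ⟨n, rfl⟩; exact hC n⟩

@[simp] lemma seq_add (x y : Yinf 𝒩) (n : ℤ) : (x + y).seq n = x.seq n + y.seq n := rfl
@[simp] lemma seq_neg (x : Yinf 𝒩) (n : ℤ) : (-x).seq n = -(x.seq n) := rfl
@[simp] lemma seq_smul (c : ℝ) (x : Yinf 𝒩) (n : ℤ) : (c • x).seq n = c • (x.seq n) := rfl
@[simp] lemma seq_zero (n : ℤ) : (0 : Yinf 𝒩).seq n = 0 := rfl

instance : NormedAddCommGroup (Yinf 𝒩) :=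
  AddGroupNorm.toNormedAddCommGroup
    { toFun := fun x => ⨆ n : ℤ, 𝒩.N n (x.seq n)
      map_zero' := by simp
      add_le' := by
        intro x y
        refine ciSup_le fun n => ?_
        calc 𝒩.N n ((x + y).seq n) = 𝒩.N n (x.seq n + y.seq n) := by rw [seq_add]
          _ ≤ 𝒩.N n (x.seq n) + 𝒩.N n (y.seq n) := map_add_le_add _ _ _
          _ ≤ _ := add_le_add (le_ciSup x.bddAbove n) (le_ciSup y.bddAbove n)
      neg' := by
        intro x
        refine iSup_congr fun n => ?_
        rw [seq_neg, map_neg_eq_map]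
      eq_zero_of_map_eq_zero' := by
        intro x hx
        have h0 : ∀ n : ℤ, x.seq n = 0 := by
          intro n
          have h1 : 𝒩.N n (x.seq n) ≤ 0 := hx ▸ le_ciSup x.bddAbove n
          have h2 : ‖x.seq n‖ ≤ 0 := le_trans (𝒩.lower n _) h1
          exact norm_le_zero_iff.mp h2
        apply Subtype.ext
        funext n
        exact h0 n }

lemma norm_def (x : Yinf 𝒩) : ‖x‖ = ⨆ n : ℤ, 𝒩.N n (x.seq n) := rfl

instance : NormedSpace ℝ (Yinf 𝒩) where
  norm_smul_le c x := by
    rw [norm_def, norm_def]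
    rw [Real.mul_iSup_of_nonneg (norm_nonneg c)]
    refine ciSup_le fun n => ?_
    rw [seq_smul, map_smul_eq_mul]
    have hb : BddAbove (Set.range fun m : ℤ => ‖c‖ * 𝒩.N m (x.seq m)) := by
      obtain ⟨C, hC⟩ := x.bddAbove
      refine ⟨‖c‖ * C, ?_⟩
      rintro _ ⟨m, rfl⟩
      exact mul_le_mul_of_nonneg_left (hC ⟨m, rfl⟩) (norm_nonneg c)
    exact le_ciSup hb n

end Yinf

/-- A (possibly rescaled) evolution family `S` admits a strong exponential dichotomy
with respect to the family of norms `N t`. -/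
def SEDfam (d : ℕ) (S : ℝ → ℝ → Ed d → Ed d) (N : ℝ → Seminorm ℝ (Ed d)) : Prop :=
  ∃ (Q : ℝ → Ed d →L[ℝ] Ed d) (K lam lamBar : ℝ),
    0 < K ∧ 0 < lam ∧ lam ≤ lamBar ∧
    (∀ t, (Q t).comp (Q t) = Q t) ∧
    (∀ t s x, S t s (Q s x) = Q t (S t s x)) ∧
    (∀ t s x, s ≤ t → N t (S t s (Q s x)) ≤ K * Real.exp (-lam * (t - s)) * N s x) ∧
    (∀ t s x, t ≤ s → N t (S t s (x - Q s x)) ≤ K * Real.exp (-lam * (s - t)) * N s x) ∧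
    (∀ t s x, N t (S t s x) ≤ K * Real.exp (lamBar * |t - s|) * N s x)

section Aux
variable {d : ℕ}

lemma aux_seminorm_sub_le (p : Seminorm ℝ (Ed d)) (x y : Ed d) : |p x - p y| ≤ p (x - y) := by
  rw [abs_sub_le_iff]
  have hxy : p (y - x) = p (x - y) := by rw [← map_neg_eq_map p, neg_sub]
  constructor
  · have h := map_add_le_add p (x - y) y
    rw [sub_add_cancel] at h
    linarith
  · have h := map_add_le_add p (y - x) x
    rw [sub_add_cancel] at h
    linarith

lemma aux_seminorm_continuous (p : Seminorm ℝ (Ed d)) (c : ℝ) (h : ∀ x, p x ≤ c * ‖x‖) :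
    Continuous fun x => p x := by
  have hl : LipschitzWith (Real.toNNReal c) fun x => p x := by
    apply LipschitzWith.of_dist_le_mul
    intro x y
    rw [Real.dist_eq, dist_eq_norm]
    calc |p x - p y| ≤ p (x - y) := aux_seminorm_sub_le p x y
      _ ≤ c * ‖x - y‖ := h _
      _ ≤ Real.toNNReal c * ‖x - y‖ := by
          gcongr
          exact Real.le_coe_toNNReal c
  exact hl.continuous

lemma aux_seminorm_sum_le (p : Seminorm ℝ (Ed d)) {ι : Type*} (s : Finset ι) (f : ι → Ed d) :
    p (∑ i ∈ s, f i) ≤ ∑ i ∈ s, p (f i) := by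
  classical
  induction s using Finset.induction_on with
  | empty => simp
  | insert a s h ih =>
      rw [Finset.sum_insert h, Finset.sum_insert h]
      exact (map_add_le_add p _ _).trans (by linarith)

lemma aux_seminorm_tsum_le (p : Seminorm ℝ (Ed d)) (c : ℝ) (hc : ∀ x, p x ≤ c * ‖x‖)
    (f : ℤ → Ed d) (b : ℤ → ℝ) (hfb : ∀ i, p (f i) ≤ b i) (hb : Summable b)
    (hf : Summable f) : p (∑' i, f i) ≤ ∑' i, b i := by
  have hcont := aux_seminorm_continuous p c hc
  have htend : Filter.Tendsto (fun s : Finset ℤ => p (∑ i ∈ s, f i)) Filter.atTop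
      (nhds (p (∑' i, f i))) := ((hcont.tendsto _).comp hf.hasSum)
  refine le_of_tendsto htend (Filter.Eventually.of_forall fun s => ?_)
  calc p (∑ i ∈ s, f i) ≤ ∑ i ∈ s, p (f i) := aux_seminorm_sum_le p s f
    _ ≤ ∑ i ∈ s, b i := Finset.sum_le_sum fun i _ => hfb i
    _ ≤ ∑' i, b i := Summable.sum_le_tsum s (fun i _ => le_trans (apply_nonneg p _) (hfb i)) hb

lemma aux_summable_exp (lam : ℝ) (hlam : 0 < lam) :
    Summable (fun j : ℤ => Real.exp (-lam * |(j : ℝ)|)) := by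
  have h : Summable fun n : ℕ => Real.exp ((n : ℝ) * -lam) :=
    Real.summable_exp_nat_mul_iff.mpr (neg_lt_zero.mpr hlam)
  apply Summable.of_nat_of_neg_add_one
  · refine h.congr fun n => ?_
    congr 1
    push_cast
    rw [abs_of_nonneg (by positivity)]
    ring
  · have h1 : Summable fun n : ℕ => Real.exp (((n + 1 : ℕ) : ℝ) * -lam) := by
      exact (summable_nat_add_iff 1).mpr h
    refine h1.congr fun n => ?_
    congr 1
    push_cast
    rw [abs_of_nonpos (by linarith [Nat.cast_nonneg (α := ℝ) n])]
    ring

lemma aux_vanish {E : Type*} [NormedAddCommGroup E] (v : E) (a lam M : ℝ) (hlam : 0 < lam)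
    (h : ∀ j : ℕ, ‖v‖ ≤ a * Real.exp (-lam * j) * M) : v = 0 := by
  rw [← norm_le_zero_iff]
  have hpow : ∀ j : ℕ, Real.exp (-lam * j) = Real.exp (-lam) ^ j := fun j => by
    rw [← Real.exp_nat_mul]; ring_nf
  have h0 : Filter.Tendsto (fun j : ℕ => Real.exp (-lam) ^ j) Filter.atTop (nhds 0) :=
    tendsto_pow_atTop_nhds_zero_of_lt_one (Real.exp_nonneg _)
      (Real.exp_lt_one_iff.mpr (by linarith))
  have hT : Filter.Tendsto (fun j : ℕ => a * Real.exp (-lam * j) * M) Filter.atTop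
      (nhds (a * 0 * M)) := by
    apply Filter.Tendsto.mul_const
    apply Filter.Tendsto.const_mul
    exact h0.congr fun j => (hpow j).symm
  have := ge_of_tendsto' hT h
  linarith [this]


end Aux

theorem dichotomy_of_rescaled_family_implies_resolvent (d : ℕ)
    -- the linear equation x' = A(t) x and its evolution family T(t,s)
    (A : ℝ → Ed d →L[ℝ] Ed d) (T : ℝ → ℝ → Ed d →L[ℝ] Ed d)
    (hT_id : ∀ t, T t t = ContinuousLinearMap.id ℝ (Ed d))
    (hT_comp : ∀ t s r, (T t s).comp (T s r) = T t r)
    (hT_deriv : ∀ s x t, HasDerivAt (fun τ => T τ s x) (A t (T t s x)) t)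
    -- the family of norms ‖·‖_t = N t with its comparison constants
    (N : ℝ → Seminorm ℝ (Ed d)) (C eps : ℝ) (hC : 0 < C) (heps : 0 ≤ eps)
    (hlowN : ∀ (t : ℝ) (x : Ed d), ‖x‖ ≤ N t x)
    (hupN : ∀ (t : ℝ) (x : Ed d), N t x ≤ C * Real.exp (eps * |t|) * ‖x‖)
    -- x' = A(t)x admits a strong exponential dichotomy w.r.t. the norms ‖·‖_t
    (hSED : SEDfam d (fun t s x => T t s x) N)
    -- the norms at integer times, and the Banach space Y_∞
    (𝒩 : NormFamily d) (h𝒩 : ∀ n : ℤ, 𝒩.N n = N (n : ℝ))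
    -- the bounded invertible operator 𝔸 on Y_∞, (𝔸 x)_n = A_{n-1} x_{n-1} = T(n,n-1) x_{n-1}
    (𝔸 : Yinf 𝒩 →L[ℝ] Yinf 𝒩) (h𝔸inv : IsUnit 𝔸)
    (h𝔸 : ∀ (x : Yinf 𝒩) (n : ℤ),
      (𝔸 x).seq n = T (n : ℝ) ((n - 1 : ℤ) : ℝ) (x.seq (n - 1)))
    -- μ > 0 is such that T_μ(t,s) = μ^{-(t-s)} T(t,s) admits a strong
    -- exponential dichotomy with respect to the norms ‖·‖_t
    (μ : ℝ) (hμ : 0 < μ)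
    (hdich : SEDfam d (fun t s x => Real.rpow μ (s - t) • T t s x) N) :
    -- then μ does not belong to the spectrum of 𝔸, i.e. μ·Id − 𝔸 is invertible
    μ ∉ spectrum ℝ 𝔸 ∧
      IsUnit (algebraMap ℝ (Yinf 𝒩 →L[ℝ] Yinf 𝒩) μ - 𝔸) := by
  classical
  obtain ⟨Q, K, lam, lamBar, hK, hlam, hll, hQproj, hQS, hb1, hb2, hb3⟩ := hdich
  have hμ' : μ ≠ 0 := ne_of_gt hμ
  have hTT : ∀ (a b c : ℝ) (w : Ed d), T a b (T b c w) = T a c w := fun a b c w => by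
    rw [← ContinuousLinearMap.comp_apply, hT_comp]
  -- rpow at integer exponents is zpow
  have hrz : ∀ (a b : ℤ), Real.rpow μ ((a : ℝ) - (b : ℝ)) = μ ^ (a - b) := by
    intro a b
    rw [show (a : ℝ) - (b : ℝ) = ((a - b : ℤ) : ℝ) by push_cast; ring]
    exact Real.rpow_intCast μ (a - b)
  -- the Green's function g n k
  obtain ⟨g, hgle, hgnle⟩ : ∃ g : ℤ → ℤ → Ed d →L[ℝ] Ed d,
      (∀ n k, k ≤ n → g n k = (μ ^ (k - n - 1) : ℝ) • ((T n k).comp (Q k))) ∧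
      (∀ n k, ¬ k ≤ n → g n k =
        (-(μ ^ (k - n - 1) : ℝ)) • ((T n k).comp (ContinuousLinearMap.id ℝ (Ed d) - Q k))) := by
    refine ⟨fun n k => if h : k ≤ n then (μ ^ (k - n - 1) : ℝ) • ((T n k).comp (Q k))
      else (-(μ ^ (k - n - 1) : ℝ)) • ((T n k).comp (ContinuousLinearMap.id ℝ (Ed d) - Q k)),
      fun n k h => by simp only [dif_pos h], fun n k h => by simp only [dif_neg h]⟩
  -- decay bound for g
  have hGb : ∀ (n k : ℤ) (x : Ed d),
      N n (g n k x) ≤ K / μ * Real.exp (-lam * |(n : ℝ) - (k : ℝ)|) * N k x := by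
    intro n k x
    have hz : (μ : ℝ) ^ (k - n - 1) = μ⁻¹ * μ ^ (k - n) := by
      rw [zpow_sub_one₀ hμ']; ring
    have hinv : (0 : ℝ) ≤ μ⁻¹ := le_of_lt (inv_pos.mpr hμ)
    by_cases hkn : k ≤ n
    · rw [hgle n k hkn]
      have h1 := hb1 (n : ℝ) (k : ℝ) x (by exact_mod_cast hkn)
      simp only [hrz k n] at h1
      rw [map_smul_eq_mul, Real.norm_eq_abs, abs_of_pos (zpow_pos hμ _)] at h1
      simp only [ContinuousLinearMap.smul_apply, ContinuousLinearMap.comp_apply]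
      rw [map_smul_eq_mul, Real.norm_eq_abs, abs_of_pos (zpow_pos hμ _)]
      rw [abs_of_nonneg (sub_nonneg.mpr (show (k : ℝ) ≤ n by exact_mod_cast hkn))]
      calc (μ : ℝ) ^ (k - n - 1) * N ↑n (T ↑n ↑k (Q ↑k x))
          = μ⁻¹ * (μ ^ (k - n) * N ↑n (T ↑n ↑k (Q ↑k x))) := by rw [hz]; ring
        _ ≤ μ⁻¹ * (K * Real.exp (-lam * ((n : ℝ) - k)) * N ↑k x) :=
            mul_le_mul_of_nonneg_left h1 hinv
        _ = K / μ * Real.exp (-lam * ((n : ℝ) - k)) * N ↑k x := by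
            rw [div_eq_mul_inv]; ring
    · rw [hgnle n k hkn]
      have h2 := hb2 (n : ℝ) (k : ℝ) x (by exact_mod_cast (le_of_not_ge hkn))
      simp only [hrz k n] at h2
      rw [map_smul_eq_mul, Real.norm_eq_abs, abs_of_pos (zpow_pos hμ _)] at h2
      simp only [ContinuousLinearMap.smul_apply, ContinuousLinearMap.comp_apply,
        ContinuousLinearMap.sub_apply, ContinuousLinearMap.id_apply]
      rw [map_smul_eq_mul, Real.norm_eq_abs, abs_neg, abs_of_pos (zpow_pos hμ _)]
      rw [abs_sub_comm, abs_of_nonneg (sub_nonneg.mpr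
        (show (n : ℝ) ≤ k by exact_mod_cast le_of_not_ge hkn))]
      calc (μ : ℝ) ^ (k - n - 1) * N ↑n (T ↑n ↑k (x - Q ↑k x))
          = μ⁻¹ * (μ ^ (k - n) * N ↑n (T ↑n ↑k (x - Q ↑k x))) := by rw [hz]; ring
        _ ≤ μ⁻¹ * (K * Real.exp (-lam * ((k : ℝ) - n)) * N ↑k x) :=
            mul_le_mul_of_nonneg_left h2 hinv
        _ = K / μ * Real.exp (-lam * ((k : ℝ) - n)) * N ↑k x := by
            rw [div_eq_mul_inv]; ring
  -- summability of the exponential weights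
  set Sl : ℝ := ∑' j : ℤ, Real.exp (-lam * |(j : ℝ)|) with hSl
  have hgeo := aux_summable_exp lam hlam
  have hshift : ∀ n : ℤ, Summable (fun k : ℤ => Real.exp (-lam * |(n : ℝ) - (k : ℝ)|)) := by
    intro n
    have h := (Equiv.subLeft n).summable_iff.mpr hgeo
    refine h.congr fun k => ?_
    simp only [Function.comp, Equiv.subLeft_apply]
    congr 1
    push_cast
    ring_nf
  have htsum_shift : ∀ n : ℤ, (∑' k : ℤ, Real.exp (-lam * |(n : ℝ) - (k : ℝ)|)) = Sl := by
    intro n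
    rw [hSl, ← (Equiv.subLeft n).tsum_eq (fun j : ℤ => Real.exp (-lam * |(j : ℝ)|))]
    refine tsum_congr fun k => ?_
    simp only [Equiv.subLeft_apply]
    congr 1
    push_cast
    ring_nf
  have hyle : ∀ (y : Yinf 𝒩) (k : ℤ), N k (y.seq k) ≤ ‖y‖ := by
    intro y k
    rw [← h𝒩, Yinf.norm_def]
    exact le_ciSup y.bddAbove k
  have hKμ : (0 : ℝ) ≤ K / μ := div_nonneg hK.le hμ.le
  have hbound : ∀ (y : Yinf 𝒩) (n k : ℤ),
      N n (g n k (y.seq k)) ≤ K / μ * Real.exp (-lam * |(n : ℝ) - (k : ℝ)|) * ‖y‖ :=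
    fun y n k => (hGb n k _).trans (mul_le_mul_of_nonneg_left (hyle y k)
      (mul_nonneg hKμ (Real.exp_nonneg _)))
  have hsum : ∀ (y : Yinf 𝒩) (n : ℤ), Summable fun k : ℤ => g n k (y.seq k) := by
    intro y n
    apply Summable.of_norm
    refine Summable.of_nonneg_of_le (fun k => norm_nonneg _) (fun k => ?_)
      (((hshift n).mul_left (K / μ)).mul_right ‖y‖)
    exact (hlowN _ _).trans (hbound y n k)
  have hNsum_le : ∀ (y : Yinf 𝒩) (n : ℤ),
      N n (∑' k, g n k (y.seq k)) ≤ K / μ * Sl * ‖y‖ := by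
    intro y n
    have h := aux_seminorm_tsum_le (N n) (C * Real.exp (eps * |(n : ℝ)|)) (hupN n)
      (fun k => g n k (y.seq k))
      (fun k => K / μ * Real.exp (-lam * |(n : ℝ) - (k : ℝ)|) * ‖y‖) (hbound y n)
      (((hshift n).mul_left (K / μ)).mul_right ‖y‖) (hsum y n)
    have heq : (∑' k : ℤ, K / μ * Real.exp (-lam * |(n : ℝ) - (k : ℝ)|) * ‖y‖)
        = K / μ * Sl * ‖y‖ := by
      rw [tsum_mul_right, tsum_mul_left, htsum_shift n]
    rw [heq] at h
    exact h
  have hmem : ∀ y : Yinf 𝒩, (fun n : ℤ => ∑' k, g n k (y.seq k)) ∈ YinfSubmodule 𝒩 :=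
    fun y => ⟨K / μ * Sl * ‖y‖, fun n => by rw [h𝒩]; exact hNsum_le y n⟩
  obtain ⟨R, hR⟩ : ∃ R : Yinf 𝒩 →L[ℝ] Yinf 𝒩,
      ∀ (y : Yinf 𝒩) (n : ℤ), (R y).seq n = ∑' k, g n k (y.seq k) := by
    refine ⟨LinearMap.mkContinuous
      { toFun := fun y => ⟨fun n => ∑' k, g n k (y.seq k), hmem y⟩
        map_add' := ?_
        map_smul' := ?_ } (K / μ * Sl) ?_, fun y n => rfl⟩
    · intro y z
      apply Subtype.ext; funext n
      show (∑' k, g n k ((y + z).seq k)) = (∑' k, g n k (y.seq k)) + ∑' k, g n k (z.seq k)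
      rw [← Summable.tsum_add (hsum y n) (hsum z n)]
      exact tsum_congr fun k => by rw [Yinf.seq_add, map_add]
    · intro c y
      apply Subtype.ext; funext n
      show (∑' k, g n k ((c • y).seq k)) = c • ∑' k, g n k (y.seq k)
      rw [← Summable.tsum_const_smul c (hsum y n)]
      exact tsum_congr fun k => by rw [Yinf.seq_smul, map_smul]
    · intro y
      rw [Yinf.norm_def]
      refine ciSup_le fun n => ?_
      rw [h𝒩]
      exact hNsum_le y n
  -- sequence description of (μ·Id − 𝔸) x
  have hseq_sub : ∀ (u v : Yinf 𝒩) (n : ℤ), (u - v).seq n = u.seq n - v.seq n :=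
    fun u v n => rfl
  have hB : ∀ (x : Yinf 𝒩) (n : ℤ),
      ((algebraMap ℝ (Yinf 𝒩 →L[ℝ] Yinf 𝒩) μ - 𝔸) x).seq n
        = μ • x.seq n - T (n : ℝ) ((n - 1 : ℤ) : ℝ) (x.seq (n - 1)) := by
    intro x n
    have h1 : (algebraMap ℝ (Yinf 𝒩 →L[ℝ] Yinf 𝒩) μ - 𝔸) x = μ • x - 𝔸 x := by
      rw [ContinuousLinearMap.sub_apply, Algebra.algebraMap_eq_smul_one,
        ContinuousLinearMap.smul_apply, ContinuousLinearMap.one_apply]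
    rw [h1, hseq_sub, Yinf.seq_smul, h𝔸]
  -- the key pointwise identity
  have hkey : ∀ (n k : ℤ) (v : Ed d),
      μ • g n k v - T (n : ℝ) ((n - 1 : ℤ) : ℝ) (g (n - 1) k v)
        = if k = n then v else 0 := by
    intro n k v
    rcases lt_trichotomy k n with hlt | heq | hgt
    · rw [if_neg (ne_of_lt hlt)]
      rw [hgle n k hlt.le, hgle (n - 1) k (by omega)]
      simp only [ContinuousLinearMap.smul_apply, ContinuousLinearMap.comp_apply]
      rw [map_smul, hTT, smul_smul]
      have hexp : (μ : ℝ) ^ (k - (n - 1) - 1) = μ * μ ^ (k - n - 1) := by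
        have h3 : k - (n - 1) - 1 = (k - n - 1) + 1 := by ring
        rw [h3, zpow_add_one₀ hμ']; ring
      rw [hexp, sub_self]
    · subst heq
      rw [if_pos rfl]
      rw [hgle k k le_rfl, hgnle (k - 1) k (by omega)]
      simp only [ContinuousLinearMap.smul_apply, ContinuousLinearMap.comp_apply,
        ContinuousLinearMap.sub_apply, ContinuousLinearMap.id_apply]
      rw [hT_id, ContinuousLinearMap.id_apply]
      have e1 : k - k - 1 = (-1 : ℤ) := by ring
      have e2 : k - (k - 1) - 1 = (0 : ℤ) := by ring
      rw [e1, e2, zpow_neg_one, zpow_zero]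
      rw [map_smul, hTT, hT_id, ContinuousLinearMap.id_apply]
      rw [smul_smul, mul_inv_cancel₀ hμ']
      module
    · rw [if_neg (by omega : ¬ k = n)]
      rw [hgnle n k (by omega), hgnle (n - 1) k (by omega)]
      simp only [ContinuousLinearMap.smul_apply, ContinuousLinearMap.comp_apply,
        ContinuousLinearMap.sub_apply, ContinuousLinearMap.id_apply]
      rw [map_smul, hTT, smul_smul]
      have hexp : -(μ : ℝ) ^ (k - (n - 1) - 1) = μ * -μ ^ (k - n - 1) := by
        have h3 : k - (n - 1) - 1 = (k - n - 1) + 1 := by ring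
        rw [h3, zpow_add_one₀ hμ']; ring
      rw [hexp, sub_self]
  -- (μ·Id − 𝔸) ∘ R = id
  have hBR : ∀ y : Yinf 𝒩, (algebraMap ℝ (Yinf 𝒩 →L[ℝ] Yinf 𝒩) μ - 𝔸) (R y) = y := by
    intro y
    apply Subtype.ext; funext n
    show ((algebraMap ℝ (Yinf 𝒩 →L[ℝ] Yinf 𝒩) μ - 𝔸) (R y)).seq n = y.seq n
    rw [hB, hR, hR]
    have hs1 : μ • (∑' k, g n k (y.seq k)) = ∑' k, μ • g n k (y.seq k) :=
      (Summable.tsum_const_smul μ (hsum y n)).symm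
    have hsum2 : Summable fun k : ℤ =>
        T (n : ℝ) ((n - 1 : ℤ) : ℝ) (g (n - 1) k (y.seq k)) :=
      (hsum y (n - 1)).mapL _
    have hs2 : T (n : ℝ) ((n - 1 : ℤ) : ℝ) (∑' k, g (n - 1) k (y.seq k))
        = ∑' k, T (n : ℝ) ((n - 1 : ℤ) : ℝ) (g (n - 1) k (y.seq k)) :=
      ContinuousLinearMap.map_tsum _ (hsum y (n - 1))
    rw [hs1, hs2, ← Summable.tsum_sub ((hsum y n).const_smul μ) hsum2]
    rw [tsum_eq_single n (fun k hk => by rw [hkey]; exact if_neg hk)]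
    rw [hkey, if_pos rfl]
  -- intertwining for T itself
  have hTQ : ∀ (t s : ℝ) (v : Ed d), T t s (Q s v) = Q t (T t s v) := by
    intro t s v
    have h := hQS t s v
    simp only [map_smul] at h
    exact smul_right_injective (Ed d) (Real.rpow_pos_of_pos hμ (s - t)).ne' h
  -- injectivity of μ·Id − 𝔸
  have hinj : ∀ x : Yinf 𝒩, (algebraMap ℝ (Yinf 𝒩 →L[ℝ] Yinf 𝒩) μ - 𝔸) x = 0 → x = 0 := by
    intro x hx
    have hrec : ∀ n : ℤ, μ • x.seq n = T (n : ℝ) ((n - 1 : ℤ) : ℝ) (x.seq (n - 1)) := by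
      intro n
      have h0 : ((algebraMap ℝ (Yinf 𝒩 →L[ℝ] Yinf 𝒩) μ - 𝔸) x).seq n = 0 := by
        rw [hx]; rfl
      rw [hB] at h0
      exact sub_eq_zero.mp h0
    have hbk : ∀ (n : ℤ) (j : ℕ), T (n : ℝ) (((n + (j : ℤ)) : ℤ) : ℝ) (x.seq (n + (j : ℤ)))
        = (μ ^ (-(j : ℤ)) : ℝ) • x.seq n := by
      intro n j
      induction j with
      | zero => simp [hT_id]
      | succ i ih =>
          have e2 : n + ((i + 1 : ℕ) : ℤ) = n + (i : ℤ) + 1 := by push_cast; ring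
          rw [e2]
          have hr := hrec (n + (i : ℤ) + 1)
          have e1 : n + (i : ℤ) + 1 - 1 = n + (i : ℤ) := by ring
          rw [e1] at hr
          have h3 : T (n : ℝ) (((n + (i : ℤ) + 1) : ℤ) : ℝ) (μ • x.seq (n + (i : ℤ) + 1))
              = T (n : ℝ) (((n + (i : ℤ)) : ℤ) : ℝ) (x.seq (n + (i : ℤ))) := by
            rw [hr, hTT]
          rw [map_smul] at h3
          have h4 : T (n : ℝ) (((n + (i : ℤ) + 1) : ℤ) : ℝ) (x.seq (n + (i : ℤ) + 1))
              = μ⁻¹ • T (n : ℝ) (((n + (i : ℤ)) : ℤ) : ℝ) (x.seq (n + (i : ℤ))) := by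
            rw [← h3, smul_smul, inv_mul_cancel₀ hμ', one_smul]
          rw [h4, ih, smul_smul]
          congr 1
          rw [show -(((i : ℕ) + 1 : ℕ) : ℤ) = -(i : ℤ) + (-1) by push_cast; ring,
            zpow_add₀ hμ', zpow_neg_one]
          ring
    have hfw : ∀ (n : ℤ) (j : ℕ), T (n : ℝ) (((n - (j : ℤ)) : ℤ) : ℝ) (x.seq (n - (j : ℤ)))
        = (μ ^ ((j : ℤ)) : ℝ) • x.seq n := by
      intro n j
      induction j with
      | zero => simp [hT_id]
      | succ i ih =>
          have e2 : n - ((i + 1 : ℕ) : ℤ) = n - (i : ℤ) - 1 := by push_cast; ring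
          rw [e2]
          have hr := hrec (n - (i : ℤ))
          have h3 : T (n : ℝ) (((n - (i : ℤ) - 1) : ℤ) : ℝ) (x.seq (n - (i : ℤ) - 1))
              = μ • T (n : ℝ) (((n - (i : ℤ)) : ℤ) : ℝ) (x.seq (n - (i : ℤ))) := by
            rw [← hTT (n : ℝ) (((n - (i : ℤ)) : ℤ) : ℝ) (((n - (i : ℤ) - 1) : ℤ) : ℝ),
              ← hr, map_smul]
          rw [h3, ih, smul_smul]
          congr 1
          rw [show (((i : ℕ) + 1 : ℕ) : ℤ) = (i : ℤ) + 1 by push_cast; ring,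
            zpow_add₀ hμ', zpow_one]
          ring
    have hQ0 : ∀ n : ℤ, Q (n : ℝ) (x.seq n) = 0 := by
      intro n
      apply aux_vanish _ K lam ‖x‖ hlam
      intro j
      have hble := hb1 ((n : ℤ) : ℝ) (((n - (j : ℤ)) : ℤ) : ℝ) (x.seq (n - (j : ℤ)))
        (by exact_mod_cast (by omega : (n - (j : ℤ)) ≤ n))
      simp only [hrz (n - (j : ℤ)) n] at hble
      rw [show n - (j : ℤ) - n = -(j : ℤ) by ring] at hble
      have hveq : (μ ^ (-(j : ℤ)) : ℝ) • T (n : ℝ) (((n - (j : ℤ)) : ℤ) : ℝ)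
          (Q (((n - (j : ℤ)) : ℤ) : ℝ) (x.seq (n - (j : ℤ)))) = Q (n : ℝ) (x.seq n) := by
        rw [hTQ, ← map_smul, hfw n j, smul_smul, ← zpow_add₀ hμ',
          show -(j : ℤ) + (j : ℤ) = 0 by ring, zpow_zero, one_smul]
      rw [hveq] at hble
      calc ‖Q (n : ℝ) (x.seq n)‖ ≤ N (n : ℝ) (Q (n : ℝ) (x.seq n)) := hlowN _ _
        _ ≤ K * Real.exp (-lam * ((n : ℝ) - ((n - (j : ℤ) : ℤ) : ℝ)))
            * N (((n - (j : ℤ)) : ℤ) : ℝ) (x.seq (n - (j : ℤ))) := hble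
        _ ≤ K * Real.exp (-lam * (j : ℝ)) * ‖x‖ := by
            rw [show (n : ℝ) - ((n - (j : ℤ) : ℤ) : ℝ) = (j : ℝ) by push_cast; ring]
            exact mul_le_mul_of_nonneg_left (hyle x (n - (j : ℤ)))
              (mul_nonneg hK.le (Real.exp_nonneg _))
    have hx0 : ∀ n : ℤ, x.seq n = 0 := by
      intro n
      have h4 : x.seq n - Q (n : ℝ) (x.seq n) = 0 := by
        apply aux_vanish _ K lam ‖x‖ hlam
        intro j
        have hble := hb2 ((n : ℤ) : ℝ) (((n + (j : ℤ)) : ℤ) : ℝ) (x.seq (n + (j : ℤ)))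
          (by exact_mod_cast (by omega : n ≤ n + (j : ℤ)))
        simp only [hrz (n + (j : ℤ)) n] at hble
        rw [show n + (j : ℤ) - n = (j : ℤ) by ring] at hble
        have h1 : (μ ^ ((j : ℤ)) : ℝ) • T (n : ℝ) (((n + (j : ℤ)) : ℤ) : ℝ)
            (x.seq (n + (j : ℤ))) = x.seq n := by
          rw [hbk n j, smul_smul, ← zpow_add₀ hμ',
            show (j : ℤ) + -(j : ℤ) = 0 by ring, zpow_zero, one_smul]
        have h2 : (μ ^ ((j : ℤ)) : ℝ) • T (n : ℝ) (((n + (j : ℤ)) : ℤ) : ℝ)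
            (Q (((n + (j : ℤ)) : ℤ) : ℝ) (x.seq (n + (j : ℤ)))) = Q (n : ℝ) (x.seq n) := by
          rw [hTQ, ← map_smul, h1]
        have hveq2 : (μ ^ ((j : ℤ)) : ℝ) • T (n : ℝ) (((n + (j : ℤ)) : ℤ) : ℝ)
            (x.seq (n + (j : ℤ)) - Q (((n + (j : ℤ)) : ℤ) : ℝ) (x.seq (n + (j : ℤ))))
            = x.seq n - Q (n : ℝ) (x.seq n) := by
          rw [map_sub, smul_sub, h1, h2]
        rw [hveq2] at hble
        calc ‖x.seq n - Q (n : ℝ) (x.seq n)‖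
            ≤ N (n : ℝ) (x.seq n - Q (n : ℝ) (x.seq n)) := hlowN _ _
          _ ≤ K * Real.exp (-lam * (((n + (j : ℤ) : ℤ) : ℝ) - (n : ℝ)))
              * N (((n + (j : ℤ)) : ℤ) : ℝ) (x.seq (n + (j : ℤ))) := hble
          _ ≤ K * Real.exp (-lam * (j : ℝ)) * ‖x‖ := by
              rw [show ((n + (j : ℤ) : ℤ) : ℝ) - (n : ℝ) = (j : ℝ) by push_cast; ring]
              exact mul_le_mul_of_nonneg_left (hyle x (n + (j : ℤ)))
                (mul_nonneg hK.le (Real.exp_nonneg _))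
      have h5 := hQ0 n
      have h6 : x.seq n = (x.seq n - Q (n : ℝ) (x.seq n)) + Q (n : ℝ) (x.seq n) := by
        abel
      rw [h6, h4, h5, add_zero]
    apply Subtype.ext; funext n
    exact hx0 n
  -- R is a two-sided inverse
  have hRB : ∀ z : Yinf 𝒩, R ((algebraMap ℝ (Yinf 𝒩 →L[ℝ] Yinf 𝒩) μ - 𝔸) z) = z := by
    intro z
    have h6 := hBR ((algebraMap ℝ (Yinf 𝒩 →L[ℝ] Yinf 𝒩) μ - 𝔸) z)
    have h7 : (algebraMap ℝ (Yinf 𝒩 →L[ℝ] Yinf 𝒩) μ - 𝔸)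
        (R ((algebraMap ℝ (Yinf 𝒩 →L[ℝ] Yinf 𝒩) μ - 𝔸) z) - z) = 0 := by
      rw [map_sub, h6, sub_self]
    exact sub_eq_zero.mp (hinj _ h7)
  have hunit : IsUnit (algebraMap ℝ (Yinf 𝒩 →L[ℝ] Yinf 𝒩) μ - 𝔸) := by
    refine ⟨⟨algebraMap ℝ (Yinf 𝒩 →L[ℝ] Yinf 𝒩) μ - 𝔸, R, ?_, ?_⟩, rfl⟩
    · apply ContinuousLinearMap.ext
      intro y
      rw [ContinuousLinearMap.mul_apply, ContinuousLinearMap.one_apply]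
      exact hBR y
    · apply ContinuousLinearMap.ext
      intro z
      rw [ContinuousLinearMap.mul_apply, ContinuousLinearMap.one_apply]
      exact hRB z
  exact ⟨spectrum.notMem_iff.mpr hunit, hunit⟩

end
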